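/- Expected cardinality of a DPP in trace form: let L be a symmetric positive semidefinite real matrix indexed by a finite set ι. Then ∑_{Y ⊆ ι} |Y| · det(L_Y) = det(L + I) · tr(L(L + I)^{-1}); that is, the expected cardinality E[|Y|] of the DPP with kernel L equals tr(K) with K = L(L + I)^{-1}. -/
import Mathlib


open Matrix BigOperators Polynomial

/-- Principal submatrix of `L` whose rows and columns are indexed by the
elements of the finite subset `Y`. -/
def principalSub {ι : Type*} (L : Matrix ι ι ℝ) (Y : Finset ι) :
    Matrix Y Y ℝ :=
  L.submatrix (fun x => x.1) (fun x => x.1)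

/-- A general principal submatrix (over any ring). -/
def principalSub' {ι : Type*} {R : Type*} (L : Matrix ι ι R) (Y : Finset ι) :
    Matrix Y Y R :=
  L.submatrix (fun x => x.1) (fun x => x.1)

lemma det_piecewise_one {ι : Type*} [Fintype ι] [DecidableEq ι] {R : Type*} [CommRing R]
    (N : Matrix ι ι R) (S : Finset ι) :
    (Matrix.of fun i j => if i ∈ S then N i j else (1 : Matrix ι ι R) i j).det
      = (principalSub' N S).det := by
  classical
  set M : Matrix ι ι R := Matrix.of fun i j => if i ∈ S then N i j else (1 : Matrix ι ι R) i j
  let e : {x // x ∈ S} ⊕ {x // ¬ x ∈ S} ≃ ι := Equiv.sumCompl (· ∈ S)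
  have h : M.submatrix e e =
      Matrix.fromBlocks (principalSub' N S)
        (Matrix.of fun (i : {x // x ∈ S}) (j : {x // ¬ x ∈ S}) => N i.1 j.1) 0 1 := by
    ext i j
    rcases i with i | i <;> rcases j with j | j
    · simp [M, e, principalSub', i.2]
    · simp [M, e, i.2]
    · have hne : (i : ι) ≠ (j : ι) := fun h => i.2 (h ▸ j.2)
      simp [M, e, i.2, Matrix.one_apply, hne]
    · by_cases hij : i = j
      · subst hij; simp [M, e, i.2, Matrix.one_apply]
      · have hne : (i : ι) ≠ (j : ι) := fun h => hij (Subtype.ext h)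
        simp [M, e, i.2, Matrix.one_apply, hne, hij]
  rw [← Matrix.det_submatrix_equiv_self e M, h, Matrix.det_fromBlocks_zero₂₁, Matrix.det_one,
    mul_one]

lemma det_one_add_X_smul_expand {ι : Type*} [Fintype ι] [DecidableEq ι] {R : Type*} [CommRing R]
    (L : Matrix ι ι R) :
    (1 + (X : R[X]) • L.map C).det
      = ∑ S : Finset ι, C (principalSub' L S).det * X ^ S.card := by
  classical
  have hdet : (1 + (X : R[X]) • L.map C).det
      = Matrix.detRowAlternating
          ((fun i => ((X : R[X]) • L.map C) i) + (fun i => (1 : Matrix ι ι R[X]) i)) := by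
    congr 1
    ext i j
    simp [Matrix.add_apply, add_comm]
  have hadd := MultilinearMap.map_add_univ
      (Matrix.detRowAlternating (R := R[X]) (n := ι)).toMultilinearMap
      (fun i => ((X : R[X]) • L.map C) i) (fun i => (1 : Matrix ι ι R[X]) i)
  simp only [AlternatingMap.coe_multilinearMap] at hadd
  rw [hdet, hadd]
  refine Finset.sum_congr rfl fun S _ => ?_
  -- the piecewise matrix
  have hfact : (Finset.piecewise S (fun i => ((X : R[X]) • L.map C) i)
        (fun i => (1 : Matrix ι ι R[X]) i))
      = Matrix.diagonal (fun i => if i ∈ S then (X : R[X]) else 1) *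
        Matrix.of (fun i j => if i ∈ S then (L.map C) i j else (1 : Matrix ι ι R[X]) i j) := by
    ext i j
    by_cases hi : i ∈ S <;>
      simp [Finset.piecewise, hi, Matrix.diagonal_mul]
  show Matrix.det _ = _
  rw [show (Finset.piecewise S (fun i => ((X : R[X]) • L.map C) i)
        (fun i => (1 : Matrix ι ι R[X]) i) : Matrix ι ι R[X]) =
      Matrix.diagonal (fun i => if i ∈ S then (X : R[X]) else 1) *
        Matrix.of (fun i j => if i ∈ S then (L.map C) i j else (1 : Matrix ι ι R[X]) i j)
    from hfact, Matrix.det_mul, Matrix.det_diagonal, det_piecewise_one]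
  have h1 : ∏ i : ι, (if i ∈ S then (X : R[X]) else 1) = X ^ S.card := by
    rw [Finset.prod_ite_mem, Finset.univ_inter, Finset.prod_const]
  have h2 : (principalSub' (L.map C) S).det = C (principalSub' L S).det := by
    have h : principalSub' (L.map C) S = (C : R →+* R[X]).mapMatrix (principalSub' L S) := rfl
    rw [h, ← RingHom.map_det]
  rw [h1, h2, mul_comm]

/-- Expected cardinality of a DPP in trace form: for a symmetric positive
semidefinite real matrix `L` indexed by a finite set `ι`,
`∑_{Y ⊆ ι} |Y| · det(L_Y) = det(L + I) · tr(L (L + I)⁻¹)`; i.e. the expected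
cardinality `E[|Y|]` of the DPP with kernel `L` equals `tr(K)` with
`K = L (L + I)⁻¹`. -/
theorem dpp_expected_cardinality {ι : Type*} [Fintype ι] [DecidableEq ι]
    (L : Matrix ι ι ℝ) (hL : L.PosSemidef) :
    ∑ Y : Finset ι, (Y.card : ℝ) * (principalSub L Y).det
      = (L + 1).det * (L * (L + 1)⁻¹).trace := by
  classical
  set P : ℝ[X] := (1 + (X : ℝ[X]) • L.map C).det with hP
  -- LHS = P'(1)
  have hexp : P = ∑ S : Finset ι, C (principalSub' L S).det * X ^ S.card :=
    det_one_add_X_smul_expand L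
  have hlhs : (derivative P).eval 1 = ∑ Y : Finset ι, (Y.card : ℝ) * (principalSub L Y).det := by
    rw [hexp, map_sum, eval_finset_sum]
    refine Finset.sum_congr rfl fun S _ => ?_
    have hps : principalSub L S = principalSub' L S := rfl
    rw [derivative_mul, derivative_C, zero_mul, zero_add, derivative_X_pow, eval_mul, eval_C,
      eval_mul, eval_C, eval_pow, eval_X, one_pow, mul_one, hps, mul_comm]
  -- positivity facts
  have hpos : (1 + L).PosDef := Matrix.PosDef.add_posSemidef Matrix.PosDef.one hL
  have hunit : IsUnit (1 + L).det := hpos.det_pos.ne'.isUnit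
  set N : Matrix ι ι ℝ := (1 + L)⁻¹ * L with hN
  have hLN : (1 + L) * N = L := by
    rw [hN, ← Matrix.mul_assoc, Matrix.mul_nonsing_inv _ hunit, Matrix.one_mul]
  -- factorization over ℝ[X]
  have hfact : P.comp (X + 1) = C (1 + L).det * (1 + (X : ℝ[X]) • N.map C).det := by
    have h1 : P.comp (X + 1)
        = ((compRingHom (X + 1) : ℝ[X] →+* ℝ[X]).mapMatrix (1 + (X : ℝ[X]) • L.map C)).det := by
      rw [hP, ← RingHom.map_det]
      rfl
    have h2 : (compRingHom (X + 1) : ℝ[X] →+* ℝ[X]).mapMatrix (1 + (X : ℝ[X]) • L.map C)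
        = ((1 + L).map C) * (1 + (X : ℝ[X]) • N.map C) := by
      have : ((1 + L).map C) * (1 + (X : ℝ[X]) • N.map C)
          = (1 + L).map C + (X : ℝ[X]) • (((1 + L) * N).map C) := by
        rw [mul_add, mul_one, Matrix.mul_smul, ← Matrix.map_mul]
      rw [this, hLN]
      ext i j
      by_cases hij : i = j <;>
        simp [Matrix.add_apply, Matrix.one_apply, hij, mul_add, add_comm, add_left_comm]
    have h3 : ((1 + L).map (C : ℝ → ℝ[X])).det = C (1 + L).det := by
      have h : (1 + L).map (C : ℝ → ℝ[X]) = (C : ℝ →+* ℝ[X]).mapMatrix (1 + L) := rfl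
      rw [h, ← RingHom.map_det]
    rw [h1, h2, Matrix.det_mul, h3]
  -- derivative of the composition at 0
  have hd1 : (derivative (P.comp (X + 1))).eval 0 = (derivative P).eval 1 := by
    rw [Polynomial.derivative_comp]
    simp [Polynomial.eval_comp]
  have hd2 : (derivative (P.comp (X + 1))).eval 0 = (1 + L).det * N.trace := by
    rw [hfact, derivative_mul, derivative_C, zero_mul, zero_add, eval_mul, eval_C,
      Matrix.derivative_det_one_add_X_smul]
  have htr : N.trace = (L * (L + 1)⁻¹).trace := by
    rw [hN, Matrix.trace_mul_comm, add_comm]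
  rw [← hlhs, ← hd1, hd2, htr, add_comm L 1]
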